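/- Let Λ ⊆ ℝ² be an additive subgroup containing two linearly independent vectors e₁, e₂, and let k be a subfield of ℝ such that every v ∈ Λ is a k-linear combination of e₁ and e₂. If A ∈ GL(2,ℝ) satisfies A(Λ) ⊆ Λ, then tr(A) ∈ k. -/

import Mathlib

theorem trace_mem_holonomy_field (Λ : AddSubgroup (Fin 2 → ℝ)) (e₁ e₂ : Fin 2 → ℝ)
    (he₁ : e₁ ∈ Λ) (he₂ : e₂ ∈ Λ) (hind : LinearIndependent ℝ ![e₁, e₂])
    (k : Subfield ℝ)
    (hk : ∀ v ∈ Λ, ∃ a b : ℝ, a ∈ k ∧ b ∈ k ∧ v = a • e₁ + b • e₂)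
    (A : Matrix (Fin 2) (Fin 2) ℝ) (hA : A.det ≠ 0)
    (hAL : ∀ v ∈ Λ, A.mulVec v ∈ Λ) :
    A.trace ∈ k := by
  obtain ⟨a, b, ha, hb, hab⟩ := hk _ (hAL e₁ he₁)
  obtain ⟨c, d, hc, hd, hcd⟩ := hk _ (hAL e₂ he₂)
  set Q : Matrix (Fin 2) (Fin 2) ℝ := Matrix.of ![e₁, e₂] with hQ
  have hQu : IsUnit Q := Matrix.linearIndependent_rows_iff_isUnit.mp (by exact hind)
  have key : Q * A.transpose = Matrix.of !![a, b; c, d] * Q := by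
    ext i j
    simp only [Matrix.mul_apply]
    fin_cases i <;>
    · simp only [hQ, Matrix.of_apply]
      rw [Fin.sum_univ_two, Fin.sum_univ_two]
      have h1 := congrFun hab j
      have h2 := congrFun hcd j
      have m00 : Matrix.of !![a, b; c, d] 0 0 = a := rfl
      have m01 : Matrix.of !![a, b; c, d] 0 1 = b := rfl
      have m10 : Matrix.of !![a, b; c, d] 1 0 = c := rfl
      have m11 : Matrix.of !![a, b; c, d] 1 1 = d := rfl
      simp [Matrix.mulVec, dotProduct, Fin.sum_univ_two, mul_comm, m00, m01, m10, m11] at h1 h2 ⊢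
      linarith
  have := hQu.invertible
  have hAt : A.transpose = Q⁻¹ * (Matrix.of !![a, b; c, d] * Q) := by
    rw [← key, ← Matrix.mul_assoc, Matrix.nonsing_inv_mul _ (((Matrix.isUnit_iff_isUnit_det Q).mp hQu)), Matrix.one_mul]
  have htr : A.trace = a + d := by
    rw [← Matrix.trace_transpose, hAt, Matrix.trace_mul_comm, Matrix.mul_assoc,
      Matrix.mul_nonsing_inv _ (((Matrix.isUnit_iff_isUnit_det Q).mp hQu)), Matrix.mul_one]
    simp [Matrix.trace_fin_two]
    rfl
  rw [htr]
  exact k.add_mem ha hd
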